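/- Let X be a metric space with distance d, let P, A ⊆ X be finite sets with |P| = n and |A| = i, where 1 ≤ i ≤ n, and set W := P \ A. If |W| > 1, then d(A, W) ≥ (i·|W| / (n·(n−1)))·div(P), where d(A,W) := Σ_{x∈A} Σ_{x'∈W} d(x,x') and div(P) := (1/2)·Σ_{x∈P} Σ_{x'∈P} d(x,x'). -/

import Mathlib

open Finset

/-- `d(A,B) = Σ_{x∈A} Σ_{x'∈B} d(x,x')`. -/
noncomputable def setDist {X : Type*} [MetricSpace X] (A B : Finset X) : ℝ :=
  ∑ x ∈ A, ∑ x' ∈ B, dist x x'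

/-- Sum-dispersion `div(B) = (1/2)·d(B,B)`. -/
noncomputable def sumDisp {X : Type*} [MetricSpace X] (B : Finset X) : ℝ :=
  (1 / 2) * setDist B B

lemma sum_pair_erase {X : Type*} [DecidableEq X] (s : Finset X) (f : X → ℝ) :
    ∑ u ∈ s, ∑ v ∈ s.erase u, (f u + f v) = 2 * ((s.card : ℝ) - 1) * ∑ u ∈ s, f u := by
  have h : ∀ u ∈ s, ∑ v ∈ s.erase u, (f u + f v)
      = ((s.card : ℝ) - 1) * f u + ((∑ v ∈ s, f v) - f u) := by
    intro u hu
    rw [Finset.sum_add_distrib, Finset.sum_const, Finset.card_erase_of_mem hu,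
      Finset.sum_erase_eq_sub hu, nsmul_eq_mul]
    have h1 : 1 ≤ s.card := Finset.card_pos.2 ⟨u, hu⟩
    have h2 : ((s.card - 1 : ℕ) : ℝ) = (s.card : ℝ) - 1 := by
      push_cast [h1]; ring
    rw [h2]
  rw [Finset.sum_congr rfl h, Finset.sum_add_distrib, Finset.sum_sub_distrib,
    ← Finset.mul_sum, Finset.sum_const, nsmul_eq_mul]
  ring

lemma setDist_nonneg {X : Type*} [MetricSpace X] (A B : Finset X) : 0 ≤ setDist A B :=
  Finset.sum_nonneg fun _ _ => Finset.sum_nonneg fun _ _ => dist_nonneg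

lemma setDist_comm {X : Type*} [MetricSpace X] (A B : Finset X) :
    setDist A B = setDist B A := by
  unfold setDist
  rw [Finset.sum_comm]
  simp_rw [dist_comm]

lemma setDist_union_left {X : Type*} [MetricSpace X] [DecidableEq X]
    (A B C : Finset X) (h : Disjoint A B) :
    setDist (A ∪ B) C = setDist A C + setDist B C :=
  Finset.sum_union h

lemma setDist_union_right {X : Type*} [MetricSpace X] [DecidableEq X]
    (A B C : Finset X) (h : Disjoint B C) :
    setDist A (B ∪ C) = setDist A B + setDist A C := by
  unfold setDist
  rw [← Finset.sum_add_distrib]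
  exact Finset.sum_congr rfl fun x _ => Finset.sum_union h

/-- For any point `a`, `d(W,W) ≤ 2(|W|-1)·d(a,W)`. -/
lemma setDist_self_le {X : Type*} [MetricSpace X] [DecidableEq X] (W : Finset X) (a : X) :
    setDist W W ≤ 2 * ((W.card : ℝ) - 1) * ∑ v ∈ W, dist a v := by
  rw [← sum_pair_erase W (fun v => dist a v)]
  unfold setDist
  apply Finset.sum_le_sum
  intro u hu
  have h0 : ∑ v ∈ W, dist u v = ∑ v ∈ W.erase u, dist u v := by
    rw [Finset.sum_erase_eq_sub hu, dist_self, sub_zero]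
  rw [h0]
  apply Finset.sum_le_sum
  intro v _
  calc dist u v ≤ dist u a + dist a v := dist_triangle u a v
    _ = dist a u + dist a v := by rw [dist_comm u a]

/-- `|W|·d(K,K) ≤ 2(|K|-1)·d(K,W)`. -/
lemma card_mul_setDist_self_le {X : Type*} [MetricSpace X] [DecidableEq X] (K W : Finset X) :
    (W.card : ℝ) * setDist K K ≤ 2 * ((K.card : ℝ) - 1) * setDist K W := by
  have hR : setDist K W = ∑ u ∈ K, ∑ v ∈ W, dist u v := rfl
  rw [hR, ← sum_pair_erase K (fun u => ∑ v ∈ W, dist u v)]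
  unfold setDist
  rw [Finset.mul_sum]
  apply Finset.sum_le_sum
  intro u hu
  have h0 : ∑ v ∈ K, dist u v = ∑ v ∈ K.erase u, dist u v := by
    rw [Finset.sum_erase_eq_sub hu, dist_self, sub_zero]
  rw [h0, Finset.mul_sum]
  apply Finset.sum_le_sum
  intro u' _
  have h1 : (W.card : ℝ) * dist u u' = ∑ _v ∈ W, dist u u' := by
    rw [Finset.sum_const, nsmul_eq_mul]
  rw [h1]
  calc ∑ _v ∈ W, dist u u' ≤ ∑ v ∈ W, (dist u v + dist v u') :=
        Finset.sum_le_sum fun v _ => dist_triangle u v u'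
    _ = (∑ v ∈ W, dist u v) + ∑ v ∈ W, dist u' v := by
        rw [Finset.sum_add_distrib]
        simp_rw [dist_comm]

set_option maxHeartbeats 1000000 in
theorem dispersion_borodin_lemma {X : Type*} [MetricSpace X] [DecidableEq X]
    (P A : Finset X) (n i : ℕ)
    (hP : P.card = n) (hA : A.card = i) (hi1 : 1 ≤ i) (hin : i ≤ n)
    (hW : 1 < (P \ A).card) :
    ((i : ℝ) * ((P \ A).card : ℝ) / ((n : ℝ) * ((n : ℝ) - 1))) * sumDisp P ≤
      setDist A (P \ A) := by
  -- real quantities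
  have hwr : ∃ wr : ℝ, wr = ((P \ A).card : ℝ) := ⟨_, rfl⟩
  obtain ⟨wr, hwr⟩ := hwr
  set kr : ℝ := ((P ∩ A).card : ℝ) with hkr
  set mr : ℝ := ((A \ P).card : ℝ) with hmr
  set SW : ℝ := setDist (P \ A) (P \ A) with hSW
  set SK : ℝ := setDist (P ∩ A) (P ∩ A) with hSKdef
  set C : ℝ := setDist (P ∩ A) (P \ A) with hCdef
  set E : ℝ := setDist (A \ P) (P \ A) with hEdef
  -- cardinality relations
  have hn : (n : ℝ) = wr + kr := by
    rw [hwr, hkr, ← hP, ← Finset.card_sdiff_add_card_inter P A]; push_cast; ring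
  have hi : (i : ℝ) = mr + kr := by
    rw [hmr, hkr, Finset.inter_comm P A, ← hA, ← Finset.card_sdiff_add_card_inter A P]
    push_cast; ring
  have hw2 : (2 : ℝ) ≤ wr := by rw [hwr]; exact_mod_cast hW
  have hin' : (i : ℝ) ≤ (n : ℝ) := by exact_mod_cast hin
  have hkr0 : 0 ≤ kr := by rw [hkr]; positivity
  have hmr0 : 0 ≤ mr := by rw [hmr]; positivity
  have hmw : mr ≤ wr := by rw [hi, hn] at hin'; linarith
  have hn2 : (2 : ℝ) ≤ (n : ℝ) := by rw [hn]; linarith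
  -- decomposition of setDist A (P \ A)
  have hsplitA : setDist A (P \ A) = E + C := by
    have hdisj : Disjoint (A \ P) (A ∩ P) := Finset.disjoint_sdiff_inter A P
    have hAU : (A \ P) ∪ (A ∩ P) = A := Finset.sdiff_union_inter A P
    calc setDist A (P \ A) = setDist ((A \ P) ∪ (A ∩ P)) (P \ A) := by rw [hAU]
      _ = setDist (A \ P) (P \ A) + setDist (A ∩ P) (P \ A) :=
          setDist_union_left _ _ _ hdisj
      _ = E + C := by rw [hEdef, hCdef, Finset.inter_comm A P]
  -- decomposition of setDist P P
  have hsplitP : setDist P P = SW + 2 * C + SK := by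
    have hdisj : Disjoint (P \ A) (P ∩ A) := Finset.disjoint_sdiff_inter P A
    have hPU : (P \ A) ∪ (P ∩ A) = P := Finset.sdiff_union_inter P A
    calc setDist P P = setDist ((P \ A) ∪ (P ∩ A)) ((P \ A) ∪ (P ∩ A)) := by rw [hPU]
      _ = setDist (P \ A) ((P \ A) ∪ (P ∩ A)) + setDist (P ∩ A) ((P \ A) ∪ (P ∩ A)) :=
          setDist_union_left _ _ _ hdisj
      _ = (setDist (P \ A) (P \ A) + setDist (P \ A) (P ∩ A))
          + (setDist (P ∩ A) (P \ A) + setDist (P ∩ A) (P ∩ A)) := by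
          rw [setDist_union_right _ _ _ hdisj, setDist_union_right _ _ _ hdisj]
      _ = SW + 2 * C + SK := by
          rw [setDist_comm (P \ A) (P ∩ A), hSW, hCdef, hSKdef]; ring
  -- triangle-inequality bounds
  have hCk : kr * SW ≤ 2 * (wr - 1) * C := by
    have h := Finset.sum_le_sum (fun a (_ : a ∈ P ∩ A) => setDist_self_le (P \ A) a)
    rw [Finset.sum_const, nsmul_eq_mul, ← Finset.mul_sum] at h
    rw [hkr, hSW, hCdef, hwr]
    exact h
  have hEm : mr * SW ≤ 2 * (wr - 1) * E := by
    have h := Finset.sum_le_sum (fun a (_ : a ∈ A \ P) => setDist_self_le (P \ A) a)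
    rw [Finset.sum_const, nsmul_eq_mul, ← Finset.mul_sum] at h
    rw [hmr, hSW, hEdef, hwr]
    exact h
  have hSK : wr * SK ≤ 2 * (kr - 1) * C := by
    rw [hwr, hSKdef, hkr, hCdef]
    exact card_mul_setDist_self_le (P ∩ A) (P \ A)
  have hSW0 : 0 ≤ SW := setDist_nonneg _ _
  have hC0 : 0 ≤ C := setDist_nonneg _ _
  have hE0 : 0 ≤ E := setDist_nonneg _ _
  have hSK0 : 0 ≤ SK := setDist_nonneg _ _
  -- scaled inequalities: the positivity certificate
  have hw1 : (0 : ℝ) ≤ wr - 1 := by linarith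
  have hA1 : ((mr + kr) * (wr - 1)) * (wr * SK)
      ≤ ((mr + kr) * (wr - 1)) * (2 * (kr - 1) * C) :=
    mul_le_mul_of_nonneg_left hSK (by positivity)
  have hB1 : ((wr + kr - 1) * (wr - mr)) * (kr * SW)
      ≤ ((wr + kr - 1) * (wr - mr)) * (2 * (wr - 1) * C) := by
    apply mul_le_mul_of_nonneg_left hCk
    have h1 : (0 : ℝ) ≤ wr + kr - 1 := by linarith
    have h2 : (0 : ℝ) ≤ wr - mr := by linarith
    positivity
  have hC1 : ((wr + kr) * (wr + kr - 1)) * (mr * SW)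
      ≤ ((wr + kr) * (wr + kr - 1)) * (2 * (wr - 1) * E) := by
    apply mul_le_mul_of_nonneg_left hEm
    have h1 : (0 : ℝ) ≤ wr + kr - 1 := by linarith
    have h2 : (0 : ℝ) ≤ wr + kr := by linarith
    positivity
  have hD1 : (0 : ℝ) ≤ (mr + kr) * wr * kr * SW := by positivity
  -- put everything together
  have hpos : (0 : ℝ) < (wr + kr) * (wr + kr - 1) := by nlinarith
  have hpos2 : (0 : ℝ) < wr - 1 := by linarith
  rw [sumDisp, hsplitP, hsplitA, ← hwr, hn, hi, div_mul_eq_mul_div, div_le_iff₀ hpos]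
  rw [← mul_le_mul_iff_of_pos_right hpos2]
  linarith [hA1, hB1, hC1, hD1]
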